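/- Let ω : (ℝᵐ)ⁿ → ℝ be an alternating n-linear map with n ≥ 2 whose comass is at most 1 (i.e. ω(v₁,…,vₙ) ≤ 1 for every orthonormal tuple), and let M₀, M₁ : ℝⁿ → ℝᵐ be linear maps such that M₁ − M₀ has rank at most one. Then for every λ ∈ [0,1], |ω(M₁e₁,…,M₁eₙ) − ω(M₀e₁,…,M₀eₙ)| ≤ n·‖M₁ − M₀‖·‖(1−λ)M₀ + λM₁‖^{n−1}, where ‖·‖ is the operator norm. -/

import Mathlib

noncomputable section
open MeasureTheory Real Set Filter

/-- `ℝⁿ` with the Euclidean norm. -/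
abbrev Euc (n : ℕ) : Type := EuclideanSpace ℝ (Fin n)

/-- The `i`-th standard basis vector of `ℝⁿ`. -/
def stdVec (n : ℕ) (i : Fin n) : Euc n := EuclideanSpace.single i 1

/-- A linear map has rank at most one: its image lies in the span of a single vector. -/
def RankAtMostOne {n m : ℕ} (R : Euc n →L[ℝ] Euc m) : Prop :=
  ∃ u : Euc m, ∀ x : Euc n, ∃ c : ℝ, R x = c • u

section AuxLemmas
variable {E : Type*} [NormedAddCommGroup E] [InnerProductSpace ℝ E] {n : ℕ}

/-- An alternating form applied to linear combinations picks up a determinant factor. -/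
lemma aux_alt_map_matrix (f : AlternatingMap ℝ E ℝ (Fin n)) (A : Matrix (Fin n) (Fin n) ℝ)
    (w : Fin n → E) :
    f (fun i => ∑ j, A j i • w j) = A.det * f w := by
  classical
  have h1 : f (fun i => ∑ j, A j i • w j)
      = ∑ r : Fin n → Fin n, f (fun i => A (r i) i • w (r i)) :=
    f.toMultilinearMap.map_sum (fun i j => A j i • w j)
  have h2 : ∀ r : Fin n → Fin n, f (fun i => A (r i) i • w (r i))
      = (∏ i, A (r i) i) • f (w ∘ r) := fun r =>
    f.toMultilinearMap.map_smul_univ (fun i => A (r i) i) (w ∘ r)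
  rw [h1]
  simp_rw [h2]
  rw [← Finset.sum_filter_add_sum_filter_not Finset.univ (fun r => Function.Bijective r)]
  have h3 : ∑ r ∈ Finset.univ.filter (fun r : Fin n → Fin n => ¬ Function.Bijective r),
      (∏ i, A (r i) i) • f (w ∘ r) = 0 := by
    refine Finset.sum_eq_zero fun r hr => ?_
    simp only [Finset.mem_filter] at hr
    have hninj : ¬ Function.Injective r := fun h => hr.2 (Finite.injective_iff_bijective.mp h)
    rw [Function.Injective] at hninj
    push_neg at hninj
    obtain ⟨i, j, hrij, hij⟩ := hninj
    have : f (w ∘ r) = 0 := by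
      refine f.map_eq_zero_of_not_injective _ fun hinj => hij (hinj ?_)
      simp [Function.comp, hrij]
    rw [this, smul_zero]
  rw [h3, add_zero]
  rw [Matrix.det_apply', Finset.sum_mul]
  refine Finset.sum_bij (fun r hr => Equiv.ofBijective r (Finset.mem_filter.1 hr).2)
    (fun _ _ => Finset.mem_univ _) (fun _ _ _ _ h => by injection h)
    (fun σ _ => ⟨σ, Finset.mem_filter.2 ⟨Finset.mem_univ _, σ.bijective⟩,
      Equiv.coe_fn_injective rfl⟩) fun r hr => ?_
  set σ := Equiv.ofBijective r (Finset.mem_filter.1 hr).2 with hσ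
  have hco : w ∘ r = w ∘ σ := rfl
  rw [hco, f.map_perm w σ]
  have : (∏ i, A (r i) i) = ∏ i, A (σ i) i := rfl
  rw [this]
  simp only [Units.smul_def, zsmul_eq_mul, smul_eq_mul]
  ring

/-- An alternating form vanishes if two of its arguments are multiples of the same vector. -/
lemma aux_alt_two_smul (f : AlternatingMap ℝ E ℝ (Fin n)) (v : Fin n → E) {i j : Fin n}
    (hij : i ≠ j) (u : E) (α β : ℝ) (hi : v i = α • u) (hj : v j = β • u) : f v = 0 := by
  classical
  have h2 : f v = α • f (Function.update v i u) := by
    conv_lhs => rw [show v = Function.update v i (α • u) by rw [← hi, Function.update_eq_self]]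
    rw [f.map_update_smul]
  have h3 : Function.update v i u j = β • u := by
    rw [Function.update_of_ne hij.symm, hj]
  have h4 : f (Function.update v i u)
      = β • f (Function.update (Function.update v i u) j u) := by
    conv_lhs => rw [show Function.update v i u
      = Function.update (Function.update v i u) j (β • u) by rw [← h3, Function.update_eq_self]]
    rw [f.map_update_smul]
  have h5 : f (Function.update (Function.update v i u) j u) = 0 := by
    refine f.map_eq_zero_of_eq _ (i := i) (j := j) ?_ hij
    rw [Function.update_of_ne hij, Function.update_self, Function.update_self]
  rw [h2, h4, h5, smul_zero, smul_zero]

/-- Expansion of an alternating form along a rank-one perturbation: only first-order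
terms survive. -/
lemma aux_alt_expand (f : AlternatingMap ℝ E ℝ (Fin n)) (a : Fin n → E) (u : E) (p : Fin n → ℝ) :
    f (fun i => a i + p i • u) = f a + ∑ i, p i • f (Function.update a i u) := by
  classical
  have hadd : (fun i => a i + p i • u) = (fun i => p i • u) + a := funext fun i => add_comm _ _
  have h0 := f.toMultilinearMap.map_add_univ (fun i => p i • u) a
  rw [show (f (fun i => a i + p i • u)) = f.toMultilinearMap ((fun i => p i • u) + a) from
    congrArg _ hadd, h0]
  rw [← Finset.sum_filter_add_sum_filter_not Finset.univ (fun s : Finset (Fin n) => s.card ≤ 1)]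
  have h2 : ∑ s ∈ Finset.univ.filter (fun s : Finset (Fin n) => ¬ s.card ≤ 1),
      f.toMultilinearMap (s.piecewise (fun i => p i • u) a) = 0 := by
    refine Finset.sum_eq_zero fun s hs => ?_
    simp only [Finset.mem_filter, not_le] at hs
    obtain ⟨i, hi, j, hj, hij⟩ := Finset.one_lt_card.mp hs.2
    exact aux_alt_two_smul f _ hij u (p i) (p j)
      (by rw [Finset.piecewise_eq_of_mem _ _ _ hi]) (by rw [Finset.piecewise_eq_of_mem _ _ _ hj])
  rw [h2, add_zero]
  have h1 : Finset.univ.filter (fun s : Finset (Fin n) => s.card ≤ 1)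
      = insert ∅ (Finset.univ.image fun i : Fin n => ({i} : Finset (Fin n))) := by
    ext s
    simp only [Finset.mem_filter, Finset.mem_univ, true_and, Finset.mem_insert, Finset.mem_image]
    constructor
    · intro h
      rcases s.eq_empty_or_nonempty with rfl | hne
      · exact Or.inl rfl
      · obtain ⟨x, hx⟩ := hne
        right
        refine ⟨x, ((Finset.eq_singleton_iff_unique_mem).mpr
          ⟨hx, fun y hy => Finset.card_le_one.mp h y hy x hx⟩).symm⟩
    · rintro (rfl | ⟨x, -, rfl⟩) <;> simp
  rw [h1, Finset.sum_insert (by simp), Finset.sum_image (fun x _ y _ h => by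
    simpa using h)]
  simp only [Finset.piecewise_empty, Finset.piecewise_singleton]
  congr 1
  refine Finset.sum_congr rfl fun i _ => ?_
  simpa [smul_eq_mul] using f.toMultilinearMap.map_update_smul a i (p i) u

/-- An alternating form of comass at most one is bounded by the product of the norms. -/
lemma aux_comass_prod_bound (hn : 2 ≤ n) (ω : AlternatingMap ℝ E ℝ (Fin n))
    (hcomass : ∀ v : Fin n → E, Orthonormal ℝ v → ω v ≤ 1)
    (v : Fin n → E) : |ω v| ≤ ∏ i, ‖v i‖ := by
  classical
  have hprod : (0:ℝ) ≤ ∏ i, ‖v i‖ := Finset.prod_nonneg fun i _ => norm_nonneg _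
  letI : WellFoundedLT (Fin n) := Finite.to_wellFoundedLT
  by_cases hv : LinearIndependent ℝ v
  · set w := InnerProductSpace.gramSchmidtNormed ℝ v with hwdef
    have hw : Orthonormal ℝ w := InnerProductSpace.gramSchmidtNormed_orthonormal (𝕜 := ℝ) hv
    have habs : |ω w| ≤ 1 := by
      rw [abs_le]
      refine ⟨?_, hcomass w hw⟩
      have hne : (⟨0, by omega⟩ : Fin n) ≠ ⟨1, by omega⟩ := by
        simp [Fin.ext_iff]
      have h2 := hcomass (w ∘ Equiv.swap (⟨0, by omega⟩ : Fin n) ⟨1, by omega⟩)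
        (hw.comp _ (Equiv.injective _))
      rw [ω.map_swap _ hne] at h2
      linarith
    set A : Matrix (Fin n) (Fin n) ℝ := fun j i => inner ℝ (w j) (v i) with hA
    have hmem : ∀ i : Fin n, v i ∈ Submodule.span ℝ (w '' Set.Iic i) := by
      intro i
      have h1 := InnerProductSpace.mem_span_gramSchmidt ℝ v (le_refl i)
      rwa [← InnerProductSpace.span_gramSchmidtNormed] at h1
    have htri : ∀ i j : Fin n, i < j → A j i = 0 := by
      intro i j hij
      have hle : Submodule.span ℝ (w '' Set.Iic i) ≤ LinearMap.ker (innerSL ℝ (w j) : E →ₗ[ℝ] ℝ) := by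
        rw [Submodule.span_le]
        rintro x ⟨k, hk, rfl⟩
        simp only [SetLike.mem_coe, LinearMap.mem_ker]
        have hjk : j ≠ k := by
          rintro rfl
          exact absurd (Set.mem_Iic.mp hk) (not_le.mpr hij)
        exact hw.2 hjk
      have h := hle (hmem i)
      simpa [hA] using h
    have hrepr : ∀ x ∈ Submodule.span ℝ (Set.range w), (∑ j, (inner ℝ (w j) x : ℝ) • w j) = x := by
      intro x hx
      induction hx using Submodule.span_induction with
      | mem x hx =>
        obtain ⟨k, rfl⟩ := hx
        rw [Finset.sum_eq_single k]
        · rw [show (inner ℝ (w k) (w k) : ℝ) = 1 by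
            rw [real_inner_self_eq_norm_sq, hw.1 k]; norm_num, one_smul]
        · intro j _ hjk
          rw [hw.2 hjk, zero_smul]
        · intro h; exact absurd (Finset.mem_univ k) h
      | zero => simp
      | add x y hx hy ihx ihy => simp only [inner_add_right, add_smul,
          Finset.sum_add_distrib, ihx, ihy]
      | smul a x hx ih => simp only [inner_smul_right, mul_smul, ← Finset.smul_sum,
          ih, smul_eq_mul]
    have hvsum : ∀ i, v i = ∑ j, A j i • w j := by
      intro i
      refine (hrepr (v i) ?_).symm
      exact Submodule.span_mono (Set.image_subset_range w _) (hmem i)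
    have hdet : ω v = A.det * ω w := by
      conv_lhs => rw [show v = fun i => ∑ j, A j i • w j from funext hvsum]
      exact aux_alt_map_matrix ω A w
    have hdetval : A.det = ∏ i, A i i :=
      Matrix.det_of_upperTriangular (fun i j (h : j < i) => htri j i h)
    calc |ω v| = |A.det| * |ω w| := by rw [hdet, abs_mul]
      _ ≤ |A.det| := mul_le_of_le_one_right (abs_nonneg _) habs
      _ = ∏ i, |A i i| := by rw [hdetval, Finset.abs_prod]
      _ ≤ ∏ i, ‖v i‖ := by
        refine Finset.prod_le_prod (fun i _ => abs_nonneg _) fun i _ => ?_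
        calc |A i i| ≤ ‖w i‖ * ‖v i‖ := abs_real_inner_le_norm _ _
          _ = ‖v i‖ := by rw [hw.1 i, one_mul]
  · rw [ω.map_linearDependent v hv, abs_zero]
    exact hprod

end AuxLemmas

/-- A mean-value-type estimate for an alternating form of comass at most one along a
rank-one perturbation. -/
theorem alternating_rank_one_perturbation_estimate
    (m n : ℕ) (hn : 2 ≤ n)
    (ω : AlternatingMap ℝ (Euc m) ℝ (Fin n))
    (hcomass : ∀ v : Fin n → Euc m, Orthonormal ℝ v → ω v ≤ 1)
    (M₀ M₁ : Euc n →L[ℝ] Euc m) (hrank : RankAtMostOne (M₁ - M₀))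
    (lam : ℝ) (hlam0 : 0 ≤ lam) (hlam1 : lam ≤ 1) :
    |ω (fun i => M₁ (stdVec n i)) - ω (fun i => M₀ (stdVec n i))| ≤
      n * ‖M₁ - M₀‖ * ‖(1 - lam) • M₀ + lam • M₁‖ ^ (n - 1) := by
  classical
  obtain ⟨u, hu⟩ := hrank
  choose c hc using fun i => hu (stdVec n i)
  set Mlam := (1 - lam) • M₀ + lam • M₁ with hMlam
  set a : Fin n → Euc m := fun i => Mlam (stdVec n i) with ha
  have hstd : ∀ i : Fin n, ‖stdVec n i‖ = 1 := by
    intro i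
    simp [stdVec, EuclideanSpace.norm_single]
  have hsub : ∀ i : Fin n, M₁ (stdVec n i) - M₀ (stdVec n i) = c i • u := by
    intro i
    rw [← ContinuousLinearMap.sub_apply]
    exact hc i
  have E₁ : ω (fun i => M₁ (stdVec n i))
      = ω a + ∑ i, ((1 - lam) * c i) • ω (Function.update a i u) := by
    have hfun : (fun i => M₁ (stdVec n i)) = fun i => a i + ((1 - lam) * c i) • u := by
      funext i
      have h2 : ((1 - lam) * c i) • u = (1 - lam) • (M₁ (stdVec n i) - M₀ (stdVec n i)) := by
        rw [hsub i, smul_smul]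
      simp only [ha, hMlam, ContinuousLinearMap.add_apply, ContinuousLinearMap.coe_smul',
        Pi.smul_apply]
      rw [h2]
      module
    rw [hfun]
    exact aux_alt_expand ω a u _
  have E₀ : ω (fun i => M₀ (stdVec n i))
      = ω a + ∑ i, ((-lam) * c i) • ω (Function.update a i u) := by
    have hfun : (fun i => M₀ (stdVec n i)) = fun i => a i + ((-lam) * c i) • u := by
      funext i
      have h2 : ((-lam) * c i) • u = (-lam) • (M₁ (stdVec n i) - M₀ (stdVec n i)) := by
        rw [hsub i, smul_smul]
      simp only [ha, hMlam, ContinuousLinearMap.add_apply, ContinuousLinearMap.coe_smul',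
        Pi.smul_apply]
      rw [h2]
      module
    rw [hfun]
    exact aux_alt_expand ω a u _
  rw [E₁, E₀]
  have hdiff : (ω a + ∑ i, ((1 - lam) * c i) • ω (Function.update a i u))
      - (ω a + ∑ i, ((-lam) * c i) • ω (Function.update a i u))
      = ∑ i, c i • ω (Function.update a i u) := by
    rw [add_sub_add_left_eq_sub, ← Finset.sum_sub_distrib]
    refine Finset.sum_congr rfl fun i _ => ?_
    simp only [smul_eq_mul]
    ring
  rw [hdiff]
  have hbound : ∀ i : Fin n, |c i • ω (Function.update a i u)|
      ≤ ‖M₁ - M₀‖ * ‖Mlam‖ ^ (n - 1) := by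
    intro i
    have h1 : c i • ω (Function.update a i u) = ω (Function.update a i (c i • u)) := by
      rw [ω.map_update_smul]
    rw [h1, ← hsub i]
    refine (aux_comass_prod_bound hn ω hcomass _).trans ?_
    have hRe : ‖M₁ (stdVec n i) - M₀ (stdVec n i)‖ ≤ ‖M₁ - M₀‖ := by
      rw [← ContinuousLinearMap.sub_apply]
      calc ‖(M₁ - M₀) (stdVec n i)‖ ≤ ‖M₁ - M₀‖ * ‖stdVec n i‖ :=
            (M₁ - M₀).le_opNorm _
        _ = ‖M₁ - M₀‖ := by rw [hstd i, mul_one]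
    have haj : ∀ j : Fin n, ‖a j‖ ≤ ‖Mlam‖ := by
      intro j
      calc ‖Mlam (stdVec n j)‖ ≤ ‖Mlam‖ * ‖stdVec n j‖ := Mlam.le_opNorm _
        _ = ‖Mlam‖ := by rw [hstd j, mul_one]
    have hprodeq : ∏ j, ‖Function.update a i (M₁ (stdVec n i) - M₀ (stdVec n i)) j‖
        = ‖M₁ (stdVec n i) - M₀ (stdVec n i)‖ * ∏ j ∈ Finset.univ \ {i}, ‖a j‖ := by
      have h3 : (fun j => ‖Function.update a i (M₁ (stdVec n i) - M₀ (stdVec n i)) j‖)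
          = Function.update (fun j => ‖a j‖) i ‖M₁ (stdVec n i) - M₀ (stdVec n i)‖ := by
        funext j
        rcases eq_or_ne j i with rfl | hj
        · simp
        · simp [Function.update_of_ne hj]
      calc (∏ j, ‖Function.update a i (M₁ (stdVec n i) - M₀ (stdVec n i)) j‖)
          = ∏ j, Function.update (fun j => ‖a j‖) i
              ‖M₁ (stdVec n i) - M₀ (stdVec n i)‖ j :=
            Finset.prod_congr rfl fun j _ => congrFun h3 j
        _ = ‖M₁ (stdVec n i) - M₀ (stdVec n i)‖ * ∏ j ∈ Finset.univ \ {i}, ‖a j‖ :=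
            Finset.prod_update_of_mem (Finset.mem_univ i) (fun j => ‖a j‖) _
    rw [hprodeq]
    have hprodle : ∏ j ∈ Finset.univ \ {i}, ‖a j‖ ≤ ‖Mlam‖ ^ (n - 1) := by
      calc ∏ j ∈ Finset.univ \ {i}, ‖a j‖ ≤ ∏ _j ∈ Finset.univ \ {i}, ‖Mlam‖ :=
            Finset.prod_le_prod (fun j _ => norm_nonneg _) (fun j _ => haj j)
        _ = ‖Mlam‖ ^ (n - 1) := by
            rw [Finset.prod_const,
              Finset.card_sdiff_of_subset (Finset.singleton_subset_iff.mpr (Finset.mem_univ i)),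
              Finset.card_univ, Finset.card_singleton, Fintype.card_fin]
    exact mul_le_mul hRe hprodle (Finset.prod_nonneg fun j _ => norm_nonneg _) (norm_nonneg _)
  calc |∑ i, c i • ω (Function.update a i u)|
      ≤ ∑ i, |c i • ω (Function.update a i u)| := Finset.abs_sum_le_sum_abs _ _
    _ ≤ ∑ _i : Fin n, ‖M₁ - M₀‖ * ‖Mlam‖ ^ (n - 1) := Finset.sum_le_sum fun i _ => hbound i
    _ = n * ‖M₁ - M₀‖ * ‖Mlam‖ ^ (n - 1) := by
        rw [Finset.sum_const, Finset.card_univ, Fintype.card_fin, nsmul_eq_mul, mul_assoc]
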